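/- For h ≥ 2, the homogenized ideal of the Bresinsky curve (homogenization with respect to x_0) is generated by the 4h+3 polynomials p_1^H = x_2x_3 − x_1x_4, p_2^H = x_2^{2h} − x_0x_3^{2h−1}, p_{3,j}^H = x_1^{j+1}x_3^{2h−j} − x_0x_2^jx_4^{2h−j} (0 ≤ j ≤ 2h−1), p_{4,i}^H = x_1^{i+1}x_2^{2h−i} − x_0^2x_3^{i−1}x_4^{2h−i} (1 ≤ i ≤ 2h), and p_5^H = x_3^{4h} − x_2^{2h−1}x_4^{2h+1}. -/

import Mathlib

set_option maxHeartbeats 1000000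
set_option synthInstance.maxHeartbeats 400000

open MvPolynomial Finsupp

namespace Bres

variable (k : Type*) [Field k]

noncomputable def vb (h : ℕ) : Fin 5 → MvPolynomial (Fin 2) k :=
  ![(X 0 : MvPolynomial (Fin 2) k) ^ (2 * h * (2 * h + 1) + 2 * h - 1),
    X 0 ^ ((2 * h * (2 * h + 1) + 2 * h - 1) - (2 * h - 1) * (2 * h)) * X 1 ^ ((2 * h - 1) * (2 * h)),
    X 0 ^ ((2 * h * (2 * h + 1) + 2 * h - 1) - (2 * h - 1) * (2 * h + 1)) * X 1 ^ ((2 * h - 1) * (2 * h + 1)),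
    X 0 ^ ((2 * h * (2 * h + 1) + 2 * h - 1) - 2 * h * (2 * h + 1)) * X 1 ^ (2 * h * (2 * h + 1)),
    X 1 ^ (2 * h * (2 * h + 1) + 2 * h - 1)]

def Sset (h : ℕ) : Set (MvPolynomial (Fin 5) k) :=
  {q | q = X 2 * X 3 - X 1 * X 4 ∨
    q = X 2 ^ (2 * h) - X 0 * X 3 ^ (2 * h - 1) ∨
    (∃ j, j ≤ 2 * h - 1 ∧
      q = X 1 ^ (j + 1) * X 3 ^ (2 * h - j) - X 0 * X 2 ^ j * X 4 ^ (2 * h - j)) ∨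
    (∃ i, 1 ≤ i ∧ i ≤ 2 * h ∧
      q = X 1 ^ (i + 1) * X 2 ^ (2 * h - i) - X 0 ^ 2 * X 3 ^ (i - 1) * X 4 ^ (2 * h - i)) ∨
    q = X 3 ^ (4 * h) - X 2 ^ (2 * h - 1) * X 4 ^ (2 * h + 1)}


lemma vb_eq (m : ℕ) :
    vb k (m + 2) = ![(X 0 : MvPolynomial (Fin 2) k) ^ (4*m^2+20*m+23),
      X 0 ^ (6*m+11) * X 1 ^ (4*m^2+14*m+12),
      X 0 ^ (4*m+8) * X 1 ^ (4*m^2+16*m+15),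
      X 0 ^ (2*m+3) * X 1 ^ (4*m^2+18*m+20),
      X 1 ^ (4*m^2+20*m+23)] := by
  have e1 : 2*(m+2)*(2*(m+2)+1) = 4*m^2+18*m+20 := by ring
  have hn4 : 2*(m+2)*(2*(m+2)+1)+2*(m+2)-1 = 4*m^2+20*m+23 := by omega
  have hn1 : (2*(m+2)-1)*(2*(m+2)) = 4*m^2+14*m+12 := by
    rw [show 2*(m+2)-1 = 2*m+3 from by omega]; ring
  have hn2 : (2*(m+2)-1)*(2*(m+2)+1) = 4*m^2+16*m+15 := by
    rw [show 2*(m+2)-1 = 2*m+3 from by omega]; ring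
  unfold vb
  rw [hn4, hn1, hn2, e1]
  rw [show 4*m^2+20*m+23 - (4*m^2+14*m+12) = 6*m+11 from by omega,
    show 4*m^2+20*m+23 - (4*m^2+16*m+15) = 4*m+8 from by omega,
    show 4*m^2+20*m+23 - (4*m^2+18*m+20) = 2*m+3 from by omega]


lemma span_le_ker (h : ℕ) (hh : 2 ≤ h) :
    Ideal.span (Sset k h) ≤ RingHom.ker (aeval (R := k) (vb k h)).toRingHom := by
  obtain ⟨m, rfl⟩ : ∃ m, h = m + 2 := ⟨h - 2, by omega⟩
  rw [Ideal.span_le]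
  rintro q hq
  simp only [Sset, Set.mem_setOf_eq] at hq
  have hv := vb_eq k m
  simp only [SetLike.mem_coe, RingHom.mem_ker, AlgHom.toRingHom_eq_coe, RingHom.coe_coe]
  obtain rfl | rfl | ⟨j, hj, rfl⟩ | ⟨i, hi1, hi2, rfl⟩ | rfl := hq
  · -- p1
    rw [map_sub, map_mul, map_mul, aeval_X, aeval_X, aeval_X, aeval_X, hv, sub_eq_zero]
    show (X 0 ^ (4*m+8) * X 1 ^ (4*m^2+16*m+15)) * (X 0 ^ (2*m+3) * X 1 ^ (4*m^2+18*m+20))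
      = (X 0 ^ (6*m+11) * X 1 ^ (4*m^2+14*m+12)) * ((X 1 : MvPolynomial (Fin 2) k) ^ (4*m^2+20*m+23))
    have hs : (4*m+8) + (2*m+3) = 6*m+11 := by ring
    have ht : (4*m^2+16*m+15) + (4*m^2+18*m+20) = (4*m^2+14*m+12) + (4*m^2+20*m+23) := by ring
    calc (X 0 ^ (4*m+8) * X 1 ^ (4*m^2+16*m+15)) * (X 0 ^ (2*m+3) * X 1 ^ (4*m^2+18*m+20))
        = (X 0 : MvPolynomial (Fin 2) k) ^ ((4*m+8) + (2*m+3)) * X 1 ^ ((4*m^2+16*m+15) + (4*m^2+18*m+20)) := by ring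
      _ = _ := by rw [hs, ht]; ring
  · -- p2
    rw [map_sub, map_pow, map_mul, map_pow, aeval_X, aeval_X, aeval_X, hv, sub_eq_zero]
    rw [show 2*(m+2)-1 = 2*m+3 from by omega, show 2*(m+2) = 2*m+4 from by ring]
    show ((X 0:MvPolynomial (Fin 2) k) ^ (4*m+8) * X 1 ^ (4*m^2+16*m+15))^(2*m+4)
      = X 0 ^ (4*m^2+20*m+23) * ((X 0:MvPolynomial (Fin 2) k) ^ (2*m+3) * X 1 ^ (4*m^2+18*m+20))^(2*m+3)
    have hs : (4*m+8) * (2*m+4) = (4*m^2+20*m+23) + (2*m+3)*(2*m+3) := by ring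
    have ht : (4*m^2+16*m+15) * (2*m+4) = (4*m^2+18*m+20) * (2*m+3) := by ring
    calc ((X 0:MvPolynomial (Fin 2) k) ^ (4*m+8) * X 1 ^ (4*m^2+16*m+15))^(2*m+4)
        = X 0 ^ ((4*m+8) * (2*m+4)) * X 1 ^ ((4*m^2+16*m+15) * (2*m+4)) := by ring
      _ = _ := by rw [hs, ht]; ring
  · -- p3
    obtain ⟨l, hl⟩ : ∃ l, 2*(m+2) - j = l ∧ j + l = 2*m+4 := ⟨2*(m+2)-j, rfl, by omega⟩
    obtain ⟨hl1, hl2⟩ := hl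
    rw [map_sub, map_mul, map_mul, map_mul, map_pow, map_pow, map_pow, map_pow,
      aeval_X, aeval_X, aeval_X, aeval_X, aeval_X, hv, hl1, sub_eq_zero]
    show ((X 0:MvPolynomial (Fin 2) k) ^ (6*m+11) * X 1 ^ (4*m^2+14*m+12))^(j+1)
        * ((X 0:MvPolynomial (Fin 2) k) ^ (2*m+3) * X 1 ^ (4*m^2+18*m+20))^l
      = X 0 ^ (4*m^2+20*m+23) * ((X 0:MvPolynomial (Fin 2) k) ^ (4*m+8) * X 1 ^ (4*m^2+16*m+15))^j
        * ((X 1:MvPolynomial (Fin 2) k) ^ (4*m^2+20*m+23))^l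
    have hs : (6*m+11)*(j+1) + (2*m+3)*l = (4*m^2+20*m+23) + (4*m+8)*j := by
      zify; zify at hl2; linear_combination (2*(m:ℤ)+3) * hl2
    have ht : (4*m^2+14*m+12)*(j+1) + (4*m^2+18*m+20)*l
        = (4*m^2+16*m+15)*j + (4*m^2+20*m+23)*l := by
      zify; zify at hl2; linear_combination (-(2*(m:ℤ)+3)) * hl2
    calc ((X 0:MvPolynomial (Fin 2) k) ^ (6*m+11) * X 1 ^ (4*m^2+14*m+12))^(j+1)
        * ((X 0:MvPolynomial (Fin 2) k) ^ (2*m+3) * X 1 ^ (4*m^2+18*m+20))^l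
        = X 0 ^ ((6*m+11)*(j+1) + (2*m+3)*l)
          * X 1 ^ ((4*m^2+14*m+12)*(j+1) + (4*m^2+18*m+20)*l) := by ring
      _ = _ := by rw [hs, ht]; ring
  · -- p4
    obtain ⟨i', rfl⟩ : ∃ i', i = i' + 1 := ⟨i - 1, by omega⟩
    obtain ⟨l, hl1, hl2⟩ : ∃ l, 2*(m+2) - (i'+1) = l ∧ i' + 1 + l = 2*m+4 :=
      ⟨2*(m+2)-(i'+1), rfl, by omega⟩
    rw [map_sub, map_mul, map_mul, map_mul, map_pow, map_pow, map_pow, map_pow, map_pow,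
      aeval_X, aeval_X, aeval_X, aeval_X, aeval_X, hv, hl1, sub_eq_zero,
      show i' + 1 - 1 = i' from by omega]
    show ((X 0:MvPolynomial (Fin 2) k) ^ (6*m+11) * X 1 ^ (4*m^2+14*m+12))^(i'+1+1)
        * ((X 0:MvPolynomial (Fin 2) k) ^ (4*m+8) * X 1 ^ (4*m^2+16*m+15))^l
      = (X 0 ^ (4*m^2+20*m+23))^2 * ((X 0:MvPolynomial (Fin 2) k) ^ (2*m+3) * X 1 ^ (4*m^2+18*m+20))^i'
        * ((X 1:MvPolynomial (Fin 2) k) ^ (4*m^2+20*m+23))^l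
    have hs : (6*m+11)*(i'+1+1) + (4*m+8)*l = (4*m^2+20*m+23)*2 + (2*m+3)*i' := by
      zify; zify at hl2; linear_combination (4*(m:ℤ)+8) * hl2
    have ht : (4*m^2+14*m+12)*(i'+1+1) + (4*m^2+16*m+15)*l
        = (4*m^2+18*m+20)*i' + (4*m^2+20*m+23)*l := by
      zify; zify at hl2; linear_combination (-(4*(m:ℤ)+8)) * hl2
    calc ((X 0:MvPolynomial (Fin 2) k) ^ (6*m+11) * X 1 ^ (4*m^2+14*m+12))^(i'+1+1)
        * ((X 0:MvPolynomial (Fin 2) k) ^ (4*m+8) * X 1 ^ (4*m^2+16*m+15))^l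
        = X 0 ^ ((6*m+11)*(i'+1+1) + (4*m+8)*l)
          * X 1 ^ ((4*m^2+14*m+12)*(i'+1+1) + (4*m^2+16*m+15)*l) := by ring
      _ = _ := by rw [hs, ht]; ring
  · -- p5
    rw [map_sub, map_pow, map_mul, map_pow, map_pow, aeval_X, aeval_X, aeval_X, hv, sub_eq_zero,
      show 2*(m+2)-1 = 2*m+3 from by omega, show 4*(m+2) = 4*m+8 from by ring,
      show 2*(m+2)+1 = 2*m+5 from by ring]
    show ((X 0:MvPolynomial (Fin 2) k) ^ (2*m+3) * X 1 ^ (4*m^2+18*m+20))^(4*m+8)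
      = ((X 0:MvPolynomial (Fin 2) k) ^ (4*m+8) * X 1 ^ (4*m^2+16*m+15))^(2*m+3)
        * ((X 1:MvPolynomial (Fin 2) k) ^ (4*m^2+20*m+23))^(2*m+5)
    have hs : (2*m+3)*(4*m+8) = (4*m+8)*(2*m+3) := by ring
    have ht : (4*m^2+18*m+20)*(4*m+8) = (4*m^2+16*m+15)*(2*m+3) + (4*m^2+20*m+23)*(2*m+5) := by ring
    calc ((X 0:MvPolynomial (Fin 2) k) ^ (2*m+3) * X 1 ^ (4*m^2+18*m+20))^(4*m+8)
        = X 0 ^ ((2*m+3)*(4*m+8)) * X 1 ^ ((4*m^2+18*m+20)*(4*m+8)) := by ring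
      _ = _ := by rw [hs, ht]; ring


lemma eqM {M X : ℤ} (h0 : 0 < M) (hd : M ∣ X) (h1 : 0 < X) (h2 : X < 2*M) : X = M := by
  obtain ⟨c, rfl⟩ := hd
  rcases lt_trichotomy c 1 with hc | rfl | hc
  · have hc' : c ≤ 0 := by omega
    nlinarith
  · ring
  · have hc' : 2 ≤ c := by omega
    nlinarith

lemma zeroM {M X : ℤ} (h0 : 0 < M) (hd : M ∣ X) (h1 : -M < X) (h2 : X < M) : X = 0 := by
  obtain ⟨c, rfl⟩ := hd
  rcases lt_trichotomy c 0 with hc | rfl | hc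
  · have hc' : c ≤ -1 := by omega
    nlinarith
  · ring
  · have hc' : 1 ≤ c := by omega
    nlinarith

lemma cancel2p {h X : ℤ} (hd : (2*h+1) ∣ 2*X) : (2*h+1) ∣ X :=
  (show IsCoprime (2*h+1) 2 from ⟨1, -h, by ring⟩).dvd_of_dvd_mul_left hd

lemma cancel2m {h X : ℤ} (hd : (2*h-1) ∣ 2*X) : (2*h-1) ∣ X :=
  (show IsCoprime (2*h-1) 2 from ⟨1, -(h-1), by ring⟩).dvd_of_dvd_mul_left hd

lemma cancel4h {h X : ℤ} (hd : (2*h+1) ∣ 4*h*X) : (2*h+1) ∣ X :=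
  (show IsCoprime (2*h+1) (4*h) from ⟨-(2*h-1), h, by ring⟩).dvd_of_dvd_mul_left hd

lemma cancelpm {h X : ℤ} (hd : (2*h-1) ∣ (2*h+1)*X) : (2*h-1) ∣ X :=
  (show IsCoprime (2*h-1) (2*h+1) from ⟨-(h+1), h, by ring⟩).dvd_of_dvd_mul_left hd

lemma caseI (h a0 a1 a2 b0 b1 b2 : ℤ) (hh : 2 ≤ h)
    (ha1 : 0 ≤ a1) (ha1' : a1 ≤ 2*h) (ha2 : 0 ≤ a2) (ha2' : a2 ≤ 2*h-1)
    (hb1 : 0 ≤ b1) (hb1' : b1 ≤ 2*h) (hb2 : 0 ≤ b2) (hb2' : b2 ≤ 2*h-1)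
    (E : a0*(4*h^2+2*h) + 4*h*a1 + (2*h+1)*a2 = b0*(4*h^2+2*h) + 4*h*b1 + (2*h+1)*b2) :
    a0 = b0 ∧ a1 = b1 ∧ a2 = b2 := by
  have hN : (0:ℤ) < 4*h^2+2*h := by nlinarith
  have hE2 : (a0-b0)*(4*h^2+2*h) = 4*h*(b1-a1) + (2*h+1)*(b2-a2) := by linear_combination E
  have t1 : 4*h*(b1-a1) ≤ 4*h*(2*h) := by
    apply mul_le_mul_of_nonneg_left (by linarith) (by linarith)
  have t1' : -(4*h*(2*h)) ≤ 4*h*(b1-a1) := by nlinarith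
  have t2 : (2*h+1)*(b2-a2) ≤ (2*h+1)*(2*h-1) := by
    apply mul_le_mul_of_nonneg_left (by linarith) (by linarith)
  have t2' : -((2*h+1)*(2*h-1)) ≤ (2*h+1)*(b2-a2) := by nlinarith
  have hup : (a0-b0)*(4*h^2+2*h) < 3*(4*h^2+2*h) := by nlinarith
  have hlo : -(3*(4*h^2+2*h)) < (a0-b0)*(4*h^2+2*h) := by nlinarith
  have he0u : a0 - b0 < 3 := by
    by_contra hc
    push_neg at hc
    nlinarith
  have he0l : -3 < a0 - b0 := by
    by_contra hc
    push_neg at hc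
    nlinarith
  have hcases : a0 - b0 = -2 ∨ a0 - b0 = -1 ∨ a0 - b0 = 0 ∨ a0 - b0 = 1 ∨ a0 - b0 = 2 := by omega
  have hp : (0:ℤ) < 2*h+1 := by linarith
  -- helper to finish from a1 = b1 value and remaining equation
  rcases hcases with he | he | he | he | he
  · -- a0 = b0 - 2 : 4h(a1-b1) + (2h+1)(a2-b2) = 2N
    exfalso
    have hd : (2*h+1) ∣ 4*h*(a1-b1) := ⟨b2-a2+4*h, by linear_combination E - (4*h^2+2*h)*he⟩
    have h1 : a1 - b1 = 0 := by
      refine zeroM hp (cancel4h hd) (by linarith) (by linarith)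
    have h2 : (2*h+1)*(a2-b2) = (2*h+1)*(4*h) := by
      linear_combination E - (4*h^2+2*h)*he - 4*h*h1
    have := mul_left_cancel₀ (by linarith : (2*h+1:ℤ) ≠ 0) h2
    linarith
  · exfalso
    have hd : (2*h+1) ∣ 4*h*(a1-b1) := ⟨b2-a2+2*h, by linear_combination E - (4*h^2+2*h)*he⟩
    have h1 : a1 - b1 = 0 := by
      refine zeroM hp (cancel4h hd) (by linarith) (by linarith)
    have h2 : (2*h+1)*(a2-b2) = (2*h+1)*(2*h) := by
      linear_combination E - (4*h^2+2*h)*he - 4*h*h1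
    have := mul_left_cancel₀ (by linarith : (2*h+1:ℤ) ≠ 0) h2
    linarith
  · have hd : (2*h+1) ∣ 4*h*(a1-b1) := ⟨b2-a2, by linear_combination E - (4*h^2+2*h)*he⟩
    have h1 : a1 - b1 = 0 := by
      refine zeroM hp (cancel4h hd) (by linarith) (by linarith)
    have h2 : (2*h+1)*(a2-b2) = (2*h+1)*0 := by
      linear_combination E - (4*h^2+2*h)*he - 4*h*h1
    have := mul_left_cancel₀ (by linarith : (2*h+1:ℤ) ≠ 0) h2
    exact ⟨by linarith, by linarith, by linarith⟩
  · exfalso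
    have hd : (2*h+1) ∣ 4*h*(a1-b1) := ⟨b2-a2-2*h, by linear_combination E - (4*h^2+2*h)*he⟩
    have h1 : a1 - b1 = 0 := by
      refine zeroM hp (cancel4h hd) (by linarith) (by linarith)
    have h2 : (2*h+1)*(a2-b2) = (2*h+1)*(-(2*h)) := by
      linear_combination E - (4*h^2+2*h)*he - 4*h*h1
    have := mul_left_cancel₀ (by linarith : (2*h+1:ℤ) ≠ 0) h2
    linarith
  · exfalso
    have hd : (2*h+1) ∣ 4*h*(a1-b1) := ⟨b2-a2-4*h, by linear_combination E - (4*h^2+2*h)*he⟩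
    have h1 : a1 - b1 = 0 := by
      refine zeroM hp (cancel4h hd) (by linarith) (by linarith)
    have h2 : (2*h+1)*(a2-b2) = (2*h+1)*(-(4*h)) := by
      linear_combination E - (4*h^2+2*h)*he - 4*h*h1
    have := mul_left_cancel₀ (by linarith : (2*h+1:ℤ) ≠ 0) h2
    linarith


lemma caseII (h a0 a2 a4 b0 b1 b2 : ℤ) (hh : 2 ≤ h)
    (ha0 : 0 ≤ a0) (ha2 : 0 ≤ a2) (ha2' : a2 ≤ 2*h-1) (ha4 : 1 ≤ a4)
    (hb0 : 0 ≤ b0) (hb1 : 0 ≤ b1) (hb1' : b1 ≤ 2*h) (hb2 : 0 ≤ b2) (hb2' : b2 ≤ 2*h-1)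
    (hb4cond : 2 ≤ b1 → b1 + b2 ≤ 2*h)
    (ha3cond : 1 ≤ a0 → a2 + a4 ≤ 2*h-1)
    (ha5cond : 2*h-1 ≤ a2 → a4 ≤ 2*h)
    (E : a0*(4*h^2+2*h) + (2*h+1)*a2 - (2*h-1)*a4 = b0*(4*h^2+2*h) + 4*h*b1 + (2*h+1)*b2) :
    False := by
  have hN : (0:ℤ) < 4*h^2+2*h := by nlinarith
  have hp : (0:ℤ) < 2*h+1 := by linarith
  have hq : (0:ℤ) < 2*h-1 := by linarith
  rcases le_or_gt 1 a0 with h0 | h0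
  · have ha4' : a4 ≤ 2*h-1 := by have := ha3cond h0; linarith
    have hE2 : (a0-b0)*(4*h^2+2*h) = (2*h-1)*a4 + 4*h*b1 + (2*h+1)*(b2-a2) := by
      linear_combination E
    have t1 : (2*h-1)*a4 ≤ (2*h-1)*(2*h-1) :=
      mul_le_mul_of_nonneg_left (by linarith) (by linarith)
    have t1' : (2*h-1)*1 ≤ (2*h-1)*a4 :=
      mul_le_mul_of_nonneg_left (by linarith) (by linarith)
    have t2 : 4*h*b1 ≤ 4*h*(2*h) :=
      mul_le_mul_of_nonneg_left (by linarith) (by linarith)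
    have t2' : 0 ≤ 4*h*b1 := mul_nonneg (by linarith) hb1
    have t3 : (2*h+1)*(b2-a2) ≤ (2*h+1)*(2*h-1) :=
      mul_le_mul_of_nonneg_left (by linarith) (by linarith)
    have t3' : -((2*h+1)*(2*h-1)) ≤ (2*h+1)*(b2-a2) := by nlinarith
    have he0u : a0 - b0 < 4 := by
      by_contra hc; push_neg at hc; nlinarith
    have he0l : -1 < a0 - b0 := by
      by_contra hc; push_neg at hc; nlinarith
    have hcases : a0 - b0 = 0 ∨ a0 - b0 = 1 ∨ a0 - b0 = 2 ∨ a0 - b0 = 3 := by omega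
    have step : ∀ c : ℤ, a0 - b0 = c →
        (2*h+1) ∣ 2*(a4+b1) := by
      intro c he
      exact ⟨a4+2*b1+b2-a2-2*h*c, by linear_combination E - (4*h^2+2*h)*he⟩
    rcases hcases with he | he | he | he
    · have hd := step 0 he
      have hS : a4 + b1 = 2*h+1 := eqM hp (cancel2p hd) (by linarith) (by linarith)
      have hKey : (2*h+1)*(b1+b2-a2) = (2*h+1)*(-(2*h-1)) := by
        linear_combination -E + (4*h^2+2*h)*he - (2*h-1)*hS
      have hK := mul_left_cancel₀ (by linarith : (2*h+1:ℤ) ≠ 0) hKey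
      linarith
    · have hd := step 1 he
      have hS : a4 + b1 = 2*h+1 := eqM hp (cancel2p hd) (by linarith) (by linarith)
      have hb1ge : 2 ≤ b1 := by linarith
      have hbc := hb4cond hb1ge
      have hKey : (2*h+1)*(b1+b2-a2) = (2*h+1)*1 := by
        linear_combination -E + (4*h^2+2*h)*he - (2*h-1)*hS
      have hK := mul_left_cancel₀ (by linarith : (2*h+1:ℤ) ≠ 0) hKey
      have := ha3cond h0
      linarith
    · have hd := step 2 he
      have hS : a4 + b1 = 2*h+1 := eqM hp (cancel2p hd) (by linarith) (by linarith)
      have hb1ge : 2 ≤ b1 := by linarith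
      have hbc := hb4cond hb1ge
      have hKey : (2*h+1)*(b1+b2-a2) = (2*h+1)*(2*h+1) := by
        linear_combination -E + (4*h^2+2*h)*he - (2*h-1)*hS
      have hK := mul_left_cancel₀ (by linarith : (2*h+1:ℤ) ≠ 0) hKey
      linarith
    · have hd := step 3 he
      have hS : a4 + b1 = 2*h+1 := eqM hp (cancel2p hd) (by linarith) (by linarith)
      have hb1ge : 2 ≤ b1 := by linarith
      have hbc := hb4cond hb1ge
      have hKey : (2*h+1)*(b1+b2-a2) = (2*h+1)*(4*h+1) := by
        linear_combination -E + (4*h^2+2*h)*he - (2*h-1)*hS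
      have hK := mul_left_cancel₀ (by linarith : (2*h+1:ℤ) ≠ 0) hKey
      linarith
  · have ha00 : a0 = 0 := by linarith
    subst ha00
    have t3 : (2*h+1)*(a2-b2) ≤ (2*h+1)*(2*h-1) :=
      mul_le_mul_of_nonneg_left (by linarith) (by linarith)
    have hb0N : 0 ≤ b0*(4*h^2+2*h) := mul_nonneg hb0 (by nlinarith)
    have hb1N : 0 ≤ 4*h*b1 := mul_nonneg (by linarith) hb1
    have ha4up : a4 ≤ 2*h+1 := by
      have h1 : (2*h-1)*a4 ≤ (2*h-1)*(2*h+1) := by nlinarith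
      exact le_of_mul_le_mul_left h1 hq
    have hb00 : b0 = 0 := by
      by_contra hb0ne
      have hb01 : 1 ≤ b0 := by omega
      have : (4*h^2+2*h) ≤ b0*(4*h^2+2*h) := le_mul_of_one_le_left (by nlinarith) hb01
      nlinarith
    subst hb00
    have hd : (2*h+1) ∣ 2*(a4+b1) := ⟨a4+2*b1+b2-a2, by linear_combination E⟩
    have hS : a4 + b1 = 2*h+1 := eqM hp (cancel2p hd) (by linarith) (by linarith)
    have hKey : (2*h+1)*(b1+b2-a2) = (2*h+1)*(-(2*h-1)) := by
      linear_combination -E - (2*h-1)*hS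
    have hK := mul_left_cancel₀ (by linarith : (2*h+1:ℤ) ≠ 0) hKey
    have hb10 : b1 = 0 := by linarith
    have hb20 : b2 = 0 := by linarith
    have ha2v : a2 = 2*h-1 := by linarith
    have := ha5cond (by linarith)
    linarith

lemma caseIIIaux (h a0 a2 a4 b0 b2 b4 : ℤ) (hh : 2 ≤ h)
    (ha2 : 0 ≤ a2) (ha2' : a2 ≤ 2*h-1) (hb2 : 0 ≤ b2) (hb2' : b2 ≤ 2*h-1)
    (ha4 : 1 ≤ a4) (ha4' : a4 ≤ 2*h-1) (hb4 : 1 ≤ b4)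
    (he0 : a0 = b0 + 1)
    (E : a0*(4*h^2+2*h) + (2*h+1)*a2 - (2*h-1)*a4
       = b0*(4*h^2+2*h) + (2*h+1)*b2 - (2*h-1)*b4) :
    False := by
  have hq : (0:ℤ) < 2*h-1 := by linarith
  have hd : (2*h-1) ∣ 2*(1+a2-b2) :=
    ⟨a4-b4-2*h-2-a2+b2, by linear_combination E - (4*h^2+2*h)*he0⟩
  obtain ⟨c, hc⟩ := cancel2m hd
  have hc0 : 0 ≤ c := by nlinarith
  have hc1 : c ≤ 1 := by nlinarith
  interval_cases c
  · have h4 : (2*h-1)*(a4-b4) = (2*h-1)*(2*h+1) := by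
      linear_combination -E + (4*h^2+2*h)*he0 + (2*h+1)*hc
    have := mul_left_cancel₀ (by linarith : (2*h-1:ℤ) ≠ 0) h4
    linarith
  · have h4 : (2*h-1)*(a4-b4) = (2*h-1)*(4*h+2) := by
      linear_combination -E + (4*h^2+2*h)*he0 + (2*h+1)*hc
    have := mul_left_cancel₀ (by linarith : (2*h-1:ℤ) ≠ 0) h4
    linarith

lemma caseIII (h a0 a2 a4 b0 b2 b4 : ℤ) (hh : 2 ≤ h)
    (ha0 : 0 ≤ a0) (hb0 : 0 ≤ b0)
    (ha2 : 0 ≤ a2) (ha2' : a2 ≤ 2*h-1) (hb2 : 0 ≤ b2) (hb2' : b2 ≤ 2*h-1)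
    (ha4 : 1 ≤ a4) (hb4 : 1 ≤ b4)
    (ha3cond : 1 ≤ a0 → a2 + a4 ≤ 2*h-1) (hb3cond : 1 ≤ b0 → b2 + b4 ≤ 2*h-1)
    (ha5cond : 2*h-1 ≤ a2 → a4 ≤ 2*h) (hb5cond : 2*h-1 ≤ b2 → b4 ≤ 2*h)
    (E : a0*(4*h^2+2*h) + (2*h+1)*a2 - (2*h-1)*a4
       = b0*(4*h^2+2*h) + (2*h+1)*b2 - (2*h-1)*b4) :
    a0 = b0 ∧ a2 = b2 ∧ a4 = b4 := by
  have hN : (0:ℤ) < 4*h^2+2*h := by nlinarith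
  have hp : (0:ℤ) < 2*h+1 := by linarith
  have hq : (0:ℤ) < 2*h-1 := by linarith
  -- common mod argument when a0 = b0
  have same : a0 = b0 →
      ((2*h-1 ≤ a2 → a4 ≤ 2*h ∧ a2 + a4 ≤ 4*h - 1) →
        True) → a0 = b0 := fun h _ => h
  rcases le_or_gt 1 a0 with h0a | h0a <;> rcases le_or_gt 1 b0 with h0b | h0b
  · -- both ≥ 1
    have ha4' : a4 ≤ 2*h-1 := by have := ha3cond h0a; linarith
    have hb4' : b4 ≤ 2*h-1 := by have := hb3cond h0b; linarith
    have hE2 : (a0-b0)*(4*h^2+2*h) = (2*h+1)*(b2-a2) + (2*h-1)*(a4-b4) := by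
      linear_combination E
    have t3 : (2*h+1)*(b2-a2) ≤ (2*h+1)*(2*h-1) :=
      mul_le_mul_of_nonneg_left (by linarith) (by linarith)
    have t3' : -((2*h+1)*(2*h-1)) ≤ (2*h+1)*(b2-a2) := by nlinarith
    have t4 : (2*h-1)*(a4-b4) ≤ (2*h-1)*(2*h-2) :=
      mul_le_mul_of_nonneg_left (by linarith) (by linarith)
    have t4' : -((2*h-1)*(2*h-2)) ≤ (2*h-1)*(a4-b4) := by nlinarith
    have he0u : a0 - b0 < 2 := by by_contra hc; push_neg at hc; nlinarith
    have he0l : -2 < a0 - b0 := by by_contra hc; push_neg at hc; nlinarith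
    have hcases : a0 - b0 = -1 ∨ a0 - b0 = 0 ∨ a0 - b0 = 1 := by omega
    rcases hcases with he | he | he
    · exact absurd (caseIIIaux h b0 b2 b4 a0 a2 a4 hh hb2 hb2' ha2 ha2' hb4 hb4' ha4
        (by linarith) E.symm) (by simp)
    · have hd : (2*h-1) ∣ (2*h+1)*(a2-b2) := ⟨a4-b4, by linear_combination E - (4*h^2+2*h)*he⟩
      obtain ⟨c, hc⟩ := cancelpm hd
      have hcl : -1 ≤ c := by nlinarith
      have hcu : c ≤ 1 := by nlinarith
      interval_cases c
      · exfalso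
        have hb2v : b2 = a2 + (2*h-1) := by linarith
        have := hb3cond h0b
        linarith
      · have ha2b2 : a2 = b2 := by linarith
        have h4 : (2*h-1)*(a4-b4) = (2*h-1)*0 := by
          linear_combination -E + (4*h^2+2*h)*he + (2*h+1)*hc
        have := mul_left_cancel₀ (by linarith : (2*h-1:ℤ) ≠ 0) h4
        exact ⟨by linarith, ha2b2, by linarith⟩
      · exfalso
        have ha2v : a2 = b2 + (2*h-1) := by linarith
        have := ha3cond h0a
        linarith
    · exact absurd (caseIIIaux h a0 a2 a4 b0 b2 b4 hh ha2 ha2' hb2 hb2' ha4 ha4' hb4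
        (by linarith) E) (by simp)
  · -- a0 ≥ 1, b0 = 0
    exfalso
    have hb00 : b0 = 0 := by linarith
    subst hb00
    have ha4' : a4 ≤ 2*h-1 := by have := ha3cond h0a; linarith
    have t3 : (2*h+1)*(b2-a2) ≤ (2*h+1)*(2*h-1) :=
      mul_le_mul_of_nonneg_left (by linarith) (by linarith)
    have t4 : (2*h-1)*(a4-b4) ≤ (2*h-1)*(2*h-2) :=
      mul_le_mul_of_nonneg_left (by linarith) (by linarith)
    have ha01 : a0 = 1 := by
      by_contra hne
      have : 2 ≤ a0 := by omega
      have h2N : 2*(4*h^2+2*h) ≤ a0*(4*h^2+2*h) :=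
        mul_le_mul_of_nonneg_right this (by nlinarith)
      nlinarith [E]
    exact caseIIIaux h a0 a2 a4 0 b2 b4 hh ha2 ha2' hb2 hb2' ha4 ha4' hb4 (by linarith) E
  · -- a0 = 0, b0 ≥ 1
    exfalso
    have ha00 : a0 = 0 := by linarith
    subst ha00
    have hb4' : b4 ≤ 2*h-1 := by have := hb3cond h0b; linarith
    have t3 : (2*h+1)*(a2-b2) ≤ (2*h+1)*(2*h-1) :=
      mul_le_mul_of_nonneg_left (by linarith) (by linarith)
    have t4 : (2*h-1)*(b4-a4) ≤ (2*h-1)*(2*h-2) :=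
      mul_le_mul_of_nonneg_left (by linarith) (by linarith)
    have hb01 : b0 = 1 := by
      by_contra hne
      have : 2 ≤ b0 := by omega
      have h2N : 2*(4*h^2+2*h) ≤ b0*(4*h^2+2*h) :=
        mul_le_mul_of_nonneg_right this (by nlinarith)
      nlinarith [E]
    exact caseIIIaux h b0 b2 b4 0 a2 a4 hh hb2 hb2' ha2 ha2' hb4 hb4' ha4 (by linarith) E.symm
  · -- both 0
    have ha00 : a0 = 0 := by linarith
    have hb00 : b0 = 0 := by linarith
    subst ha00; subst hb00
    have hd : (2*h-1) ∣ (2*h+1)*(a2-b2) := ⟨a4-b4, by linear_combination E⟩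
    obtain ⟨c, hc⟩ := cancelpm hd
    have hcl : -1 ≤ c := by nlinarith
    have hcu : c ≤ 1 := by nlinarith
    interval_cases c
    · exfalso
      have hb2v : b2 = a2 + (2*h-1) := by linarith
      have h4 : (2*h-1)*(b4-a4) = (2*h-1)*(2*h+1) := by
        linear_combination E - (2*h+1)*hc
      have := mul_left_cancel₀ (by linarith : (2*h-1:ℤ) ≠ 0) h4
      have := hb5cond (by linarith)
      linarith
    · have ha2b2 : a2 = b2 := by linarith
      have h4 : (2*h-1)*(a4-b4) = (2*h-1)*0 := by
        linear_combination -E + (2*h+1)*hc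
      have := mul_left_cancel₀ (by linarith : (2*h-1:ℤ) ≠ 0) h4
      exact ⟨rfl, ha2b2, by linarith⟩
    · exfalso
      have ha2v : a2 = b2 + (2*h-1) := by linarith
      have h4 : (2*h-1)*(a4-b4) = (2*h-1)*(2*h+1) := by
        linear_combination -E + (2*h+1)*hc
      have := mul_left_cancel₀ (by linarith : (2*h-1:ℤ) ≠ 0) h4
      have := ha5cond (by linarith)
      linarith

lemma keyZ (h : ℤ) (hh : 2 ≤ h) (a0 a1 a2 a4 b0 b1 b2 b4 : ℤ)
    (ha0 : 0 ≤ a0) (ha1 : 0 ≤ a1) (ha2 : 0 ≤ a2) (ha4 : 0 ≤ a4)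
    (hb0 : 0 ≤ b0) (hb1 : 0 ≤ b1) (hb2 : 0 ≤ b2) (hb4 : 0 ≤ b4)
    (na1 : a1 = 0 ∨ a4 = 0) (na2 : a2 ≤ 2*h-1)
    (na3 : 1 ≤ a0 → 1 ≤ a4 → a2+a4 ≤ 2*h-1)
    (na4 : 2 ≤ a1 → a1 + a2 ≤ 2*h) (na5 : 2*h-1 ≤ a2 → a4 ≤ 2*h)
    (nb1 : b1 = 0 ∨ b4 = 0) (nb2 : b2 ≤ 2*h-1)
    (nb3 : 1 ≤ b0 → 1 ≤ b4 → b2+b4 ≤ 2*h-1)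
    (nb4 : 2 ≤ b1 → b1 + b2 ≤ 2*h) (nb5 : 2*h-1 ≤ b2 → b4 ≤ 2*h)
    (E : a0*(4*h^2+2*h) + 4*h*a1 + (2*h+1)*a2 - (2*h-1)*a4
       = b0*(4*h^2+2*h) + 4*h*b1 + (2*h+1)*b2 - (2*h-1)*b4) :
    a0 = b0 ∧ a1 = b1 ∧ a2 = b2 ∧ a4 = b4 := by
  have ha1' : a1 ≤ 2*h := by
    rcases le_or_gt 2 a1 with hx | hx
    · have := na4 hx; linarith
    · linarith
  have hb1' : b1 ≤ 2*h := by
    rcases le_or_gt 2 b1 with hx | hx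
    · have := nb4 hx; linarith
    · linarith
  rcases eq_or_lt_of_le ha4 with h4a | h4a <;> rcases eq_or_lt_of_le hb4 with h4b | h4b
  · -- a4 = b4 = 0
    subst h4a; subst h4b
    obtain ⟨e1, e2, e3⟩ := caseI h a0 a1 a2 b0 b1 b2 hh ha1 ha1' ha2 na2 hb1 hb1' hb2 nb2
      (by linear_combination E)
    exact ⟨e1, e2, e3, rfl⟩
  · -- a4 = 0, b4 ≥ 1
    exfalso
    subst h4a
    have hb10 : b1 = 0 := by rcases nb1 with hx | hx; exact hx; omega
    subst hb10
    exact caseII h b0 b2 b4 a0 a1 a2 hh hb0 hb2 nb2 (by omega) ha0 ha1 ha1' ha2 na2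
      na4 (fun hx => nb3 hx (by omega)) nb5
      (by linear_combination -E)
  · -- a4 ≥ 1, b4 = 0
    exfalso
    subst h4b
    have ha10 : a1 = 0 := by rcases na1 with hx | hx; exact hx; omega
    subst ha10
    exact caseII h a0 a2 a4 b0 b1 b2 hh ha0 ha2 na2 (by omega) hb0 hb1 hb1' hb2 nb2
      nb4 (fun hx => na3 hx (by omega)) na5
      (by linear_combination E)
  · -- both ≥ 1
    have ha10 : a1 = 0 := by rcases na1 with hx | hx; exact hx; omega
    have hb10 : b1 = 0 := by rcases nb1 with hx | hx; exact hx; omega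
    subst ha10; subst hb10
    obtain ⟨e1, e2, e3⟩ := caseIII h a0 a2 a4 b0 b2 b4 hh ha0 hb0 ha2 na2 hb2 nb2
      (by omega) (by omega) (fun hx => na3 hx (by omega)) (fun hx => nb3 hx (by omega))
      na5 nb5 (by linear_combination E)
    exact ⟨e1, rfl, e2, e3⟩

/-! ### weights and normal monomials -/

def nnv (h : ℕ) : Fin 5 → ℕ :=
  ![0, (2*h-1)*(2*h), (2*h-1)*(2*h+1), 2*h*(2*h+1), 2*h*(2*h+1)+2*h-1]

def ddv (h : ℕ) : Fin 5 → ℕ := fun i => (2*h*(2*h+1)+2*h-1) - nnv h i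

def degF (a : Fin 5 →₀ ℕ) : ℕ := ∑ i, a i

def BwF (h : ℕ) (a : Fin 5 →₀ ℕ) : ℕ := ∑ i, a i * nnv h i

def AwF (h : ℕ) (a : Fin 5 →₀ ℕ) : ℕ := ∑ i, a i * ddv h i

noncomputable def Wmap (h : ℕ) (a : Fin 5 →₀ ℕ) : Fin 2 →₀ ℕ :=
  Finsupp.single 0 (AwF h a) + Finsupp.single 1 (BwF h a)

def NormE (h : ℕ) (a : Fin 5 →₀ ℕ) : Prop :=
  (a 1 = 0 ∨ a 4 = 0) ∧ a 2 + 1 ≤ 2*h ∧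
  (1 ≤ a 0 → 1 ≤ a 4 → a 2 + a 4 + 1 ≤ 2*h) ∧
  (2 ≤ a 1 → a 1 + a 2 ≤ 2*h) ∧ (2*h ≤ a 2 + 1 → a 4 ≤ 2*h)

lemma two_h_le (h : ℕ) (hh : 2 ≤ h) : 2*h ≤ 2*h*(2*h+1) :=
  Nat.le_mul_of_pos_right _ (by omega)

lemma nnv_le (h : ℕ) (hh : 2 ≤ h) (i : Fin 5) : nnv h i ≤ 2*h*(2*h+1)+2*h-1 := by
  obtain ⟨m, rfl⟩ : ∃ m, h = m + 2 := ⟨h - 2, by omega⟩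
  have r1 : 2*(m+2)-1 = 2*m+3 := by omega
  have p1 : (2*m+3)*(2*(m+2)) = 4*m^2+14*m+12 := by ring
  have p2 : (2*m+3)*(2*(m+2)+1) = 4*m^2+16*m+15 := by ring
  have p3 : 2*(m+2)*(2*(m+2)+1) = 4*m^2+18*m+20 := by ring
  fin_cases i
  · show (0:ℕ) ≤ _
    omega
  · show (2*(m+2)-1)*(2*(m+2)) ≤ _
    rw [r1]
    omega
  · show (2*(m+2)-1)*(2*(m+2)+1) ≤ _
    rw [r1]
    omega
  · show 2*(m+2)*(2*(m+2)+1) ≤ _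
    omega
  · show 2*(m+2)*(2*(m+2)+1)+2*(m+2)-1 ≤ _
    omega

lemma n4_pos (h : ℕ) (hh : 2 ≤ h) : 0 < 2*h*(2*h+1)+2*h-1 := by
  have := two_h_le h hh; omega

/-! ### injectivity on normal monomials -/

lemma injNat (h : ℕ) (hh : 2 ≤ h) (a b : Fin 5 →₀ ℕ)
    (hna : NormE h a) (hnb : NormE h b)
    (hdeg : degF a = degF b) (hB : BwF h a = BwF h b) : a = b := by
  have h1 : 1 ≤ 2*h := by omega
  have h2 : 1 ≤ 2*h*(2*h+1)+2*h := by have := two_h_le h hh; omega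
  simp only [BwF, nnv, Fin.sum_univ_five] at hB
  simp only [degF, Fin.sum_univ_five] at hdeg
  norm_num [Matrix.cons_val_zero, Matrix.cons_val_one, Matrix.cons_val_two, Matrix.cons_val_three, Matrix.cons_val_four] at hB
  zify [h1, h2] at hB
  zify at hdeg
  have E : (a 0 : ℤ)*(4*(h:ℤ)^2+2*h) + 4*h*(a 1) + (2*h+1)*(a 2) - (2*h-1)*(a 4)
      = (b 0 : ℤ)*(4*(h:ℤ)^2+2*h) + 4*h*(b 1) + (2*h+1)*(b 2) - (2*h-1)*(b 4) := by
    linear_combination (4*(h:ℤ)^2+2*(h:ℤ))*hdeg - hB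
  obtain ⟨hna1, hna2, hna3, hna4, hna5⟩ := hna
  obtain ⟨hnb1, hnb2, hnb3, hnb4, hnb5⟩ := hnb
  obtain ⟨e0, e1, e2, e4⟩ := keyZ (h:ℤ) (by exact_mod_cast hh)
    (a 0) (a 1) (a 2) (a 4) (b 0) (b 1) (b 2) (b 4)
    (by positivity) (by positivity) (by positivity) (by positivity)
    (by positivity) (by positivity) (by positivity) (by positivity)
    (by rcases hna1 with hx | hx
        · left; exact_mod_cast hx
        · right; exact_mod_cast hx)
    (by omega) (by intro u v; omega) (by intro u; omega) (by intro u; omega)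
    (by rcases hnb1 with hx | hx
        · left; exact_mod_cast hx
        · right; exact_mod_cast hx)
    (by omega) (by intro u v; omega) (by intro u; omega) (by intro u; omega)
    E
  have E0 : a 0 = b 0 := by exact_mod_cast e0
  have E1 : a 1 = b 1 := by exact_mod_cast e1
  have E2 : a 2 = b 2 := by exact_mod_cast e2
  have E4 : a 4 = b 4 := by exact_mod_cast e4
  have E3 : a 3 = b 3 := by omega
  ext i
  fin_cases i <;> assumption

lemma AwBw (h : ℕ) (hh : 2 ≤ h) (c : Fin 5 →₀ ℕ) :
    AwF h c + BwF h c = degF c * (2*h*(2*h+1)+2*h-1) := by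
  simp only [AwF, BwF, degF, ← Finset.sum_add_distrib, Finset.sum_mul]
  refine Finset.sum_congr rfl fun i _ => ?_
  rw [ddv, ← Nat.mul_add, Nat.sub_add_cancel (nnv_le h hh i)]

lemma injW (h : ℕ) (hh : 2 ≤ h) (a b : Fin 5 →₀ ℕ)
    (hna : NormE h a) (hnb : NormE h b) (hW : Wmap h a = Wmap h b) : a = b := by
  have hA : AwF h a = AwF h b := by
    have := congrArg (fun f => f 0) hW
    simpa [Wmap, Finsupp.single_apply] using this
  have hB : BwF h a = BwF h b := by
    have := congrArg (fun f => f 1) hW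
    simpa [Wmap, Finsupp.single_apply] using this
  have hdeg : degF a = degF b := by
    have h1 := AwBw h hh a
    have h2 := AwBw h hh b
    have h3 : degF a * (2*h*(2*h+1)+2*h-1) = degF b * (2*h*(2*h+1)+2*h-1) := by omega
    exact Nat.eq_of_mul_eq_mul_right (n4_pos h hh) h3
  exact injNat h hh a b hna hnb hdeg hB

/-! ### image of monomials -/

lemma vb_monomial (h : ℕ) (i : Fin 5) :
    vb k h i = monomial (Finsupp.single 0 (ddv h i) + Finsupp.single 1 (nnv h i)) (1:k) := by
  fin_cases i
  · show (X 0 : MvPolynomial (Fin 2) k) ^ (2*h*(2*h+1)+2*h-1)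
        = monomial (Finsupp.single 0 (ddv h 0) + Finsupp.single 1 (nnv h 0)) (1:k)
    have h0 : (Finsupp.single 0 (ddv h 0) + Finsupp.single 1 (nnv h 0) : Fin 2 →₀ ℕ)
        = Finsupp.single 0 (2*h*(2*h+1)+2*h-1) := by
      simp [ddv, nnv]
    rw [h0, X_pow_eq_monomial]
  · show (X 0 : MvPolynomial (Fin 2) k) ^ _ * X 1 ^ _ = _
    rw [X_pow_eq_monomial, X_pow_eq_monomial, monomial_mul, one_mul]
    rfl
  · show (X 0 : MvPolynomial (Fin 2) k) ^ _ * X 1 ^ _ = _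
    rw [X_pow_eq_monomial, X_pow_eq_monomial, monomial_mul, one_mul]
    rfl
  · show (X 0 : MvPolynomial (Fin 2) k) ^ _ * X 1 ^ _ = _
    rw [X_pow_eq_monomial, X_pow_eq_monomial, monomial_mul, one_mul]
    rfl
  · show (X 1 : MvPolynomial (Fin 2) k) ^ (2*h*(2*h+1)+2*h-1)
        = monomial (Finsupp.single 0 (ddv h 4) + Finsupp.single 1 (nnv h 4)) (1:k)
    have h0 : (Finsupp.single 0 (ddv h 4) + Finsupp.single 1 (nnv h 4) : Fin 2 →₀ ℕ)
        = Finsupp.single 1 (2*h*(2*h+1)+2*h-1) := by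
      have h4 : ddv h 4 = 0 := Nat.sub_self _
      have h5 : nnv h 4 = 2*h*(2*h+1)+2*h-1 := rfl
      rw [h4, h5, Finsupp.single_zero, zero_add]
    rw [h0, X_pow_eq_monomial]

lemma aeval_mono (h : ℕ) (a : Fin 5 →₀ ℕ) (c : k) :
    aeval (vb k h) (monomial a c) = monomial (Wmap h a) c := by
  rw [monomial_eq, map_mul, aeval_C,
    Finsupp.prod_fintype _ _ (fun i => pow_zero _), map_prod]
  simp_rw [map_pow, aeval_X, vb_monomial k h, monomial_pow, one_pow]
  rw [← monomial_sum_one]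
  rw [show (algebraMap k (MvPolynomial (Fin 2) k)) c = C c from rfl, C_mul_monomial, mul_one]
  have hW : (∑ i : Fin 5, a i • (Finsupp.single (0 : Fin 2) (ddv h i)
      + Finsupp.single 1 (nnv h i))) = Wmap h a := by
    ext j
    rw [Finsupp.finset_sum_apply]
    fin_cases j
    · simp [Wmap, AwF, Finsupp.single_apply]
    · simp [Wmap, BwF, Finsupp.single_apply]
  rw [hW]

/-! ### the reduction submodule -/

def NormSet (h : ℕ) : Set (MvPolynomial (Fin 5) k) := {p | ∃ a, NormE h a ∧ p = monomial a 1}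

noncomputable def TT (h : ℕ) : Submodule k (MvPolynomial (Fin 5) k) :=
  (Ideal.span (Sset k h)).restrictScalars k ⊔ Submodule.span k (NormSet k h)

lemma split_mono (a lt tr : Fin 5 →₀ ℕ) (hle : lt ≤ a) :
    (monomial a (1:k)) = monomial (a - lt) 1 * (monomial lt 1 - monomial tr 1)
      + monomial (a - lt + tr) 1 := by
  rw [mul_sub, monomial_mul, monomial_mul, tsub_add_cancel_of_le hle]
  ring

lemma mem_step (h : ℕ) (a lt tr : Fin 5 →₀ ℕ) (hle : lt ≤ a)
    (hgen : monomial lt (1:k) - monomial tr 1 ∈ Ideal.span (Sset k h))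
    (hnext : monomial (a - lt + tr) (1:k) ∈ TT k h) : monomial a (1:k) ∈ TT k h := by
  rw [split_mono k a lt tr hle]
  refine add_mem ?_ hnext
  apply Submodule.mem_sup_left
  exact Ideal.mul_mem_left _ _ hgen

lemma mono2 (i j : Fin 5) (e f : ℕ) :
    (X i ^ e * X j ^ f : MvPolynomial (Fin 5) k)
      = monomial (Finsupp.single i e + Finsupp.single j f) 1 := by
  rw [X_pow_eq_monomial, X_pow_eq_monomial, monomial_mul, one_mul]

lemma mono3 (i j l : Fin 5) (e f g : ℕ) :
    (X i ^ e * X j ^ f * X l ^ g : MvPolynomial (Fin 5) k)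
      = monomial (Finsupp.single i e + Finsupp.single j f + Finsupp.single l g) 1 := by
  rw [mono2, X_pow_eq_monomial, monomial_mul, one_mul]

lemma mu_decrease (d u u' v v' : ℕ) (hu : u ≤ d) (hu' : u' ≤ d) (hv : v ≤ d) (hv' : v' ≤ d)
    (hlt : u < u' ∨ (u = u' ∧ v < v')) :
    (d+1)*(d-u') + (d - v') < (d+1)*(d-u) + (d-v) := by
  rcases hlt with hlt | ⟨rfl, hlt⟩
  · have h1 : (d+1)*(d-u') + (d+1) ≤ (d+1)*(d-u) := by
      calc (d+1)*(d-u') + (d+1) = (d+1)*((d-u')+1) := by ring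
        _ ≤ (d+1)*(d-u) := Nat.mul_le_mul_left _ (by omega)
    omega
  · omega

lemma coord_le (a : Fin 5 →₀ ℕ) (i : Fin 5) : a i ≤ degF a :=
  Finset.single_le_sum (fun _ _ => Nat.zero_le _) (Finset.mem_univ i)

lemma newco (a lt tr : Fin 5 →₀ ℕ) (i : Fin 5) : (a - lt + tr) i = a i - lt i + tr i := by
  simp [Finsupp.tsub_apply]

lemma red (h : ℕ) (hh : 2 ≤ h) (a : Fin 5 →₀ ℕ) : monomial a (1:k) ∈ TT k h := by
  suffices H : ∀ n (a : Fin 5 →₀ ℕ),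
      (degF a + 1) * (degF a - a 3) + (degF a - a 0) ≤ n → monomial a (1:k) ∈ TT k h from
    H _ a le_rfl
  intro n
  induction n using Nat.strong_induction_on with
  | _ n IH =>
  intro a hμ
  by_cases hnorm : NormE h a
  · exact Submodule.mem_sup_right (Submodule.subset_span ⟨a, hnorm, rfl⟩)
  have step : ∀ lt tr : Fin 5 →₀ ℕ, lt ≤ a →
      (monomial lt (1:k) - monomial tr 1 ∈ Ideal.span (Sset k h)) →
      degF (a - lt + tr) = degF a →
      ((a 3 < (a - lt + tr) 3) ∨ ((a - lt + tr) 3 = a 3 ∧ a 0 < (a - lt + tr) 0)) →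
      monomial a (1:k) ∈ TT k h := by
    intro lt tr hle hgen hdeg hdec
    refine mem_step k h a lt tr hle hgen ?_
    refine IH _ ?_ _ le_rfl
    calc (degF (a-lt+tr) + 1) * (degF (a-lt+tr) - (a-lt+tr) 3) + (degF (a-lt+tr) - (a-lt+tr) 0)
        < (degF a + 1) * (degF a - a 3) + (degF a - a 0) := by
          rw [hdeg]
          exact mu_decrease (degF a) (a 3) ((a-lt+tr) 3) (a 0) ((a-lt+tr) 0)
            (coord_le a 3) (hdeg ▸ coord_le (a-lt+tr) 3) (coord_le a 0)
            (hdeg ▸ coord_le (a-lt+tr) 0) (by tauto)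
      _ ≤ n := hμ
  by_cases c1 : 1 ≤ a 1 ∧ 1 ≤ a 4
  · refine step (Finsupp.single 1 1 + Finsupp.single 4 1)
      (Finsupp.single 2 1 + Finsupp.single 3 1) ?_ ?_ ?_ ?_
    · rw [Finsupp.le_def]
      intro i; fin_cases i <;> simp [Finsupp.single_apply] <;> omega
    · have hs : (X 2 * X 3 - X 1 * X 4 : MvPolynomial (Fin 5) k) ∈ Ideal.span (Sset k h) :=
        Ideal.subset_span (Or.inl rfl)
      have e : (X 2 * X 3 - X 1 * X 4 : MvPolynomial (Fin 5) k)
          = monomial (Finsupp.single 2 1 + Finsupp.single 3 1) 1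
            - monomial (Finsupp.single 1 1 + Finsupp.single 4 1) 1 := by
        rw [show (X 2 * X 3 : MvPolynomial (Fin 5) k) = X 2 ^ 1 * X 3 ^ 1 by ring, mono2,
          show (X 1 * X 4 : MvPolynomial (Fin 5) k) = X 1 ^ 1 * X 4 ^ 1 by ring, mono2]
      rw [e] at hs
      rw [← neg_sub]
      exact neg_mem hs
    · simp only [degF, Fin.sum_univ_five, newco]
      simp [Finsupp.single_apply]
      omega
    · simp only [newco]
      simp [Finsupp.single_apply]
  by_cases c2 : 2*h ≤ a 2
  · refine step (Finsupp.single 2 (2*h)) (Finsupp.single 0 1 + Finsupp.single 3 (2*h-1))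
      ?_ ?_ ?_ ?_
    · rw [Finsupp.le_def]
      intro i; fin_cases i <;> simp [Finsupp.single_apply] <;> omega
    · have hs : (X 2 ^ (2*h) - X 0 * X 3 ^ (2*h-1) : MvPolynomial (Fin 5) k)
          ∈ Ideal.span (Sset k h) := Ideal.subset_span (Or.inr (Or.inl rfl))
      have e : (X 2 ^ (2*h) - X 0 * X 3 ^ (2*h-1) : MvPolynomial (Fin 5) k)
          = monomial (Finsupp.single 2 (2*h)) 1
            - monomial (Finsupp.single 0 1 + Finsupp.single 3 (2*h-1)) 1 := by
        rw [X_pow_eq_monomial,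
          show (X 0 * X 3 ^ (2*h-1) : MvPolynomial (Fin 5) k) = X 0 ^ 1 * X 3 ^ (2*h-1) by ring,
          mono2]
      rw [← e]
      exact hs
    · simp only [degF, Fin.sum_univ_five, newco]
      simp [Finsupp.single_apply]
      omega
    · simp only [newco]
      simp [Finsupp.single_apply]
      omega
  by_cases c3 : 1 ≤ a 0 ∧ 1 ≤ a 4 ∧ 2*h ≤ a 2 + a 4
  · set j := min (a 2) (2*h-1) with hj
    refine step (Finsupp.single 0 1 + Finsupp.single 2 j + Finsupp.single 4 (2*h-j))
      (Finsupp.single 1 (j+1) + Finsupp.single 3 (2*h-j)) ?_ ?_ ?_ ?_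
    · rw [Finsupp.le_def]
      intro i; fin_cases i <;> simp [Finsupp.single_apply] <;> omega
    · have hs : (X 1 ^ (j+1) * X 3 ^ (2*h-j) - X 0 * X 2 ^ j * X 4 ^ (2*h-j)
          : MvPolynomial (Fin 5) k) ∈ Ideal.span (Sset k h) :=
        Ideal.subset_span (Or.inr (Or.inr (Or.inl ⟨j, min_le_right _ _, rfl⟩)))
      have e : (X 1 ^ (j+1) * X 3 ^ (2*h-j) - X 0 * X 2 ^ j * X 4 ^ (2*h-j)
          : MvPolynomial (Fin 5) k)
          = monomial (Finsupp.single 1 (j+1) + Finsupp.single 3 (2*h-j)) 1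
            - monomial (Finsupp.single 0 1 + Finsupp.single 2 j + Finsupp.single 4 (2*h-j)) 1 := by
        rw [mono2,
          show (X 0 * X 2 ^ j * X 4 ^ (2*h-j) : MvPolynomial (Fin 5) k)
            = X 0 ^ 1 * X 2 ^ j * X 4 ^ (2*h-j) by ring, mono3]
      rw [e] at hs
      rw [← neg_sub]
      exact neg_mem hs
    · simp only [degF, Fin.sum_univ_five, newco]
      simp [Finsupp.single_apply]
      omega
    · simp only [newco]
      simp [Finsupp.single_apply]
      omega
  by_cases c4 : 2 ≤ a 1 ∧ 2*h+1 ≤ a 1 + a 2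
  · set i := min (a 1 - 1) (2*h) with hi
    refine step (Finsupp.single 1 (i+1) + Finsupp.single 2 (2*h-i))
      (Finsupp.single 0 2 + Finsupp.single 3 (i-1) + Finsupp.single 4 (2*h-i)) ?_ ?_ ?_ ?_
    · rw [Finsupp.le_def]
      intro i'; fin_cases i' <;> simp [Finsupp.single_apply] <;> omega
    · have hs : (X 1 ^ (i+1) * X 2 ^ (2*h-i) - X 0 ^ 2 * X 3 ^ (i-1) * X 4 ^ (2*h-i)
          : MvPolynomial (Fin 5) k) ∈ Ideal.span (Sset k h) :=
        Ideal.subset_span (Or.inr (Or.inr (Or.inr (Or.inl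
          ⟨i, by omega, min_le_right _ _, rfl⟩))))
      have e : (X 1 ^ (i+1) * X 2 ^ (2*h-i) - X 0 ^ 2 * X 3 ^ (i-1) * X 4 ^ (2*h-i)
          : MvPolynomial (Fin 5) k)
          = monomial (Finsupp.single 1 (i+1) + Finsupp.single 2 (2*h-i)) 1
            - monomial (Finsupp.single 0 2 + Finsupp.single 3 (i-1)
              + Finsupp.single 4 (2*h-i)) 1 := by
        rw [mono2, mono3]
      rw [← e]
      exact hs
    · simp only [degF, Fin.sum_univ_five, newco]
      simp [Finsupp.single_apply]
      omega
    · simp only [newco]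
      simp [Finsupp.single_apply]
      omega
  by_cases c5 : 2*h ≤ a 2 + 1 ∧ 2*h+1 ≤ a 4
  · refine step (Finsupp.single 2 (2*h-1) + Finsupp.single 4 (2*h+1))
      (Finsupp.single 3 (4*h)) ?_ ?_ ?_ ?_
    · rw [Finsupp.le_def]
      intro i; fin_cases i <;> simp [Finsupp.single_apply] <;> omega
    · have hs : (X 3 ^ (4*h) - X 2 ^ (2*h-1) * X 4 ^ (2*h+1)
          : MvPolynomial (Fin 5) k) ∈ Ideal.span (Sset k h) :=
        Ideal.subset_span (Or.inr (Or.inr (Or.inr (Or.inr rfl))))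
      have e : (X 3 ^ (4*h) - X 2 ^ (2*h-1) * X 4 ^ (2*h+1) : MvPolynomial (Fin 5) k)
          = monomial (Finsupp.single 3 (4*h)) 1
            - monomial (Finsupp.single 2 (2*h-1) + Finsupp.single 4 (2*h+1)) 1 := by
        rw [X_pow_eq_monomial, mono2]
      rw [e] at hs
      rw [← neg_sub]
      exact neg_mem hs
    · simp only [degF, Fin.sum_univ_five, newco]
      simp [Finsupp.single_apply]
      omega
    · simp only [newco]
      simp [Finsupp.single_apply]
      omega
  · exfalso
    apply hnorm
    refine ⟨?_, ?_, ?_, ?_, ?_⟩ <;> omega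

lemma normal_zero (h : ℕ) (hh : 2 ≤ h) (q : MvPolynomial (Fin 5) k)
    (hsupp : ∀ a ∈ q.support, NormE h a)
    (hz : aeval (vb k h) q = 0) : q = 0 := by
  have h1 : aeval (vb k h) q = ∑ b ∈ q.support, monomial (Wmap h b) (coeff b q) := by
    conv_lhs => rw [← support_sum_monomial_coeff q]
    rw [map_sum]
    exact Finset.sum_congr rfl fun b _ => aeval_mono k h b (coeff b q)
  ext a
  rw [coeff_zero]
  by_cases ha : a ∈ q.support
  · have h2 := congrArg (coeff (Wmap h a)) (h1.symm.trans hz)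
    rw [coeff_sum] at h2
    simp only [coeff_monomial, coeff_zero] at h2
    rwa [Finset.sum_eq_single_of_mem a ha (fun b hb hne => by
      rw [if_neg]
      intro hW
      exact hne (injW h hh b a (hsupp b hb) (hsupp a ha) hW)), if_pos rfl] at h2
  · exact MvPolynomial.notMem_support_iff.mp ha

theorem main (h : ℕ) (hh : 2 ≤ h) :
    RingHom.ker (aeval (R := k) (vb k h)).toRingHom = Ideal.span (Sset k h) := by
  refine le_antisymm ?_ (span_le_ker k h hh)
  intro f hf
  have hf' : aeval (vb k h) f = 0 := by
    simpa [RingHom.mem_ker] using hf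
  have hfT : f ∈ TT k h := by
    rw [← support_sum_monomial_coeff f]
    refine Submodule.sum_mem _ fun b _ => ?_
    have he : monomial b (coeff b f) = (coeff b f) • monomial b (1:k) := by
      rw [smul_monomial, smul_eq_mul, mul_one]
    rw [he]
    exact Submodule.smul_mem _ _ (red k h hh b)
  rw [TT, Submodule.mem_sup] at hfT
  obtain ⟨p, hp, q, hq, rfl⟩ := hfT
  have hpk : p ∈ Ideal.span (Sset k h) := hp
  have hpz : aeval (vb k h) p = 0 := by
    have := span_le_ker k h hh hpk
    simpa [RingHom.mem_ker] using this
  have hqz : aeval (vb k h) q = 0 := by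
    rw [map_add, hpz, zero_add] at hf'
    exact hf'
  have hqsupp : ∀ a ∈ q.support, NormE h a := by
    refine Submodule.span_induction (p := fun x _ => ∀ a ∈ x.support, NormE h a)
      ?_ ?_ ?_ ?_ hq
    · rintro x ⟨a, hna, rfl⟩ b hb
      have : b = a := by
        have h0 := MvPolynomial.support_monomial (s := a) (a := (1:k)) (h := Classical.dec _)
        rw [if_neg one_ne_zero] at h0
        classical
        rw [MvPolynomial.mem_support_iff] at hb
        by_contra hne
        apply hb
        rw [MvPolynomial.coeff_monomial, if_neg (fun hx => hne hx.symm)]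
      rwa [this]
    · simp
    · intro x y _ _ hx hy b hb
      rcases Finset.mem_union.mp (MvPolynomial.support_add hb) with hb' | hb'
      · exact hx b hb'
      · exact hy b hb'
    · intro c x _ hx b hb
      exact hx b (MvPolynomial.support_smul hb)
  have hq0 : q = 0 := normal_zero k h hh q hqsupp hqz
  rw [hq0, add_zero]
  exact hpk


end Bres

theorem bresinsky_homogenized_ideal_generators
    (k : Type*) [Field k] (h : ℕ) (hh : 2 ≤ h) :
    letI n₁ : ℕ := (2 * h - 1) * (2 * h)
    letI n₂ : ℕ := (2 * h - 1) * (2 * h + 1)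
    letI n₃ : ℕ := 2 * h * (2 * h + 1)
    letI n₄ : ℕ := 2 * h * (2 * h + 1) + 2 * h - 1
    letI s : MvPolynomial (Fin 2) k := X 0
    letI t : MvPolynomial (Fin 2) k := X 1
    letI QH : Ideal (MvPolynomial (Fin 5) k) :=
      RingHom.ker (aeval (R := k)
        ![s ^ n₄, s ^ (n₄ - n₁) * t ^ n₁, s ^ (n₄ - n₂) * t ^ n₂,
          s ^ (n₄ - n₃) * t ^ n₃, t ^ n₄]).toRingHom
    letI x₀ : MvPolynomial (Fin 5) k := X 0
    letI x₁ : MvPolynomial (Fin 5) k := X 1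
    letI x₂ : MvPolynomial (Fin 5) k := X 2
    letI x₃ : MvPolynomial (Fin 5) k := X 3
    letI x₄ : MvPolynomial (Fin 5) k := X 4
    letI S : Set (MvPolynomial (Fin 5) k) :=
      {q | q = x₂ * x₃ - x₁ * x₄ ∨
        q = x₂ ^ (2 * h) - x₀ * x₃ ^ (2 * h - 1) ∨
        (∃ j, j ≤ 2 * h - 1 ∧
          q = x₁ ^ (j + 1) * x₃ ^ (2 * h - j) - x₀ * x₂ ^ j * x₄ ^ (2 * h - j)) ∨
        (∃ i, 1 ≤ i ∧ i ≤ 2 * h ∧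
          q = x₁ ^ (i + 1) * x₂ ^ (2 * h - i) - x₀ ^ 2 * x₃ ^ (i - 1) * x₄ ^ (2 * h - i)) ∨
        q = x₃ ^ (4 * h) - x₂ ^ (2 * h - 1) * x₄ ^ (2 * h + 1)}
    QH = Ideal.span S := by
  exact Bres.main k h hh
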